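/- Let K ≥ 1, n ≥ K+1 be integers and s ∈ [0,1]. Under the random pruning-edge model, the expectation of |Z| satisfies E(|Z|) ≤ 1 + (n-K-1)·(1-s)^{n-K-1}. -/

import Mathlib

open MeasureTheory

/-- Potential pruning edges: pairs `(u,w)` with `1 ≤ u` and `u + K < w ≤ n`. -/
abbrev EdgeIdx (K n : ℕ) : Type :=
  {p : Fin (n + 1) × Fin (n + 1) // 1 ≤ (p.1 : ℕ) ∧ (p.1 : ℕ) + K < (p.2 : ℕ)}

/-- The pruning edge `e` covers the vertex `v` if `u + K < v ≤ w`. -/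
def covers {K n : ℕ} (e : EdgeIdx K n) (v : ℕ) : Prop :=
  (e.1.1 : ℕ) + K < v ∧ v ≤ (e.1.2 : ℕ)

instance {K n : ℕ} (e : EdgeIdx K n) (v : ℕ) : Decidable (covers e v) := by
  unfold covers; infer_instance

/-- The set `Z(ω)` of vertices `v ∈ {K+1, …, n}` covered by no present pruning edge. -/
def Zset (K n : ℕ) (ω : EdgeIdx K n → Bool) : Finset ℕ :=
  (Finset.Icc (K + 1) n).filter fun v => ∀ e : EdgeIdx K n, ω e = true → ¬ covers e v

/-- The product probability measure on outcomes `ω : EdgeIdx K n → Bool`, where each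
potential pruning edge is independently present with probability `s` (for `s ∈ [0,1]`;
the parameter is clamped to `[0,1]`, which is the identity for such `s`). -/
noncomputable def prunMeasure (K n : ℕ) (s : ℝ) : Measure (EdgeIdx K n → Bool) :=
  Measure.pi fun _ =>
    (PMF.bernoulli (min (Real.toNNReal s) 1) (min_le_right _ _)).toMeasure

instance (K n : ℕ) (s : ℝ) : IsProbabilityMeasure (prunMeasure K n s) := by
  unfold prunMeasure; infer_instance

set_option linter.unnecessarySeqFocus false in
/-- Each vertex `v` with `K+2 ≤ v ≤ n` is covered by at least `n-K-1` potential edges. -/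
lemma card_covers_ge (K n v : ℕ) (hv1 : K+2 ≤ v) (hv2 : v ≤ n) :
    n - K - 1 ≤ (Finset.univ.filter (fun e : EdgeIdx K n => covers e v)).card := by
  have hIcc : n - K - 1 = (Finset.Icc (K+2) n).card := by
    rw [Nat.card_Icc]; omega
  rw [hIcc]
  apply Finset.card_le_card_of_injOn
    (f := fun j => if h : K+2 ≤ j ∧ j ≤ n then
      (if h2 : j ≤ v then
        (⟨(⟨j-K-1, by omega⟩, ⟨v, by omega⟩), by constructor <;> simp <;> omega⟩ : EdgeIdx K n)
       else ⟨(⟨1, by omega⟩, ⟨j, by omega⟩), by constructor <;> simp <;> omega⟩)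
      else ⟨(⟨1, by omega⟩, ⟨v, by omega⟩), by constructor <;> simp <;> omega⟩)
  · intro j hj
    simp only [Finset.mem_coe, Finset.mem_Icc] at hj
    simp only [Finset.mem_coe, Finset.mem_filter, Finset.mem_univ, true_and]
    rw [dif_pos ⟨hj.1, hj.2⟩]
    split <;> (constructor <;> simp <;> omega)
  · intro j1 hj1 j2 hj2 heq
    simp only [Finset.coe_Icc, Set.mem_Icc] at hj1 hj2
    dsimp only at heq
    rw [dif_pos (show K+2 ≤ j1 ∧ j1 ≤ n from ⟨hj1.1, hj1.2⟩),
      dif_pos (show K+2 ≤ j2 ∧ j2 ≤ n from ⟨hj2.1, hj2.2⟩)] at heq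
    split at heq <;> split at heq <;>
      simp only [Subtype.mk.injEq, Prod.mk.injEq, Fin.mk.injEq] at heq <;> omega

/-- The probability that no present edge covers `v`. -/
lemma meas_event (K n : ℕ) (s : ℝ) (hs0 : 0 ≤ s) (hs1 : s ≤ 1) (v : ℕ) :
    prunMeasure K n s {ω | ∀ e : EdgeIdx K n, ω e = true → ¬ covers e v}
      = ENNReal.ofReal (1-s) ^ (Finset.univ.filter (fun e : EdgeIdx K n => covers e v)).card := by
  have hp : min (Real.toNNReal s) 1 = Real.toNNReal s :=
    min_eq_left (Real.toNNReal_le_one.mpr hs1)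
  have hset : {ω : EdgeIdx K n → Bool | ∀ e, ω e = true → ¬ covers e v}
      = Set.pi Set.univ (fun e => if covers e v then ({false} : Set Bool) else Set.univ) := by
    ext ω
    simp only [Set.mem_setOf_eq, Set.mem_pi, Set.mem_univ, true_implies,
      Set.mem_ite_univ_right, Set.mem_singleton_iff]
    constructor
    · intro h e he
      cases hω : ω e with
      | false => rfl
      | true => exact absurd he (h e hω)
    · intro h e he hc
      rw [h e hc] at he; exact Bool.false_ne_true he
  rw [hset]
  unfold prunMeasure
  rw [Measure.pi_pi]
  have hone : (((1:NNReal) - Real.toNNReal s : NNReal) : ENNReal) = ENNReal.ofReal (1-s) := by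
    rw [ENNReal.ofReal_sub _ hs0, ENNReal.ofReal_one, ENNReal.coe_sub, ENNReal.coe_one]; rfl
  have hfac : ∀ e : EdgeIdx K n,
      (PMF.bernoulli (min (Real.toNNReal s) 1) (min_le_right _ _)).toMeasure
        (if covers e v then ({false} : Set Bool) else Set.univ)
      = if covers e v then ENNReal.ofReal (1-s) else 1 := by
    intro e
    split
    · rw [PMF.toMeasure_apply_singleton _ _ (measurableSet_singleton _),
        PMF.bernoulli_apply, hp]
      exact hone
    · exact measure_univ
  simp only [hfac]
  rw [Finset.prod_ite, Finset.prod_const, Finset.prod_const, one_pow, mul_one]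

/-- The expectation of `|Z|` is at most `1 + (n-K-1)(1-s)^(n-K-1)`. -/
theorem stmt3 (K n : ℕ) (hK : 1 ≤ K) (hn : K + 1 ≤ n)
    (s : ℝ) (hs0 : 0 ≤ s) (hs1 : s ≤ 1) :
    ∫ ω, ((Zset K n ω).card : ℝ) ∂(prunMeasure K n s)
      ≤ 1 + ((n - K - 1 : ℕ) : ℝ) * (1 - s) ^ (n - K - 1) := by
  set μ := prunMeasure K n s with hμ
  set A : ℕ → Set (EdgeIdx K n → Bool) :=
    fun v => {ω | ∀ e : EdgeIdx K n, ω e = true → ¬ covers e v} with hA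
  have hAm : ∀ v, MeasurableSet (A v) := fun v => (Set.toFinite _).measurableSet
  have hcard : ∀ ω : EdgeIdx K n → Bool, ((Zset K n ω).card : ℝ)
      = ∑ v ∈ Finset.Icc (K+1) n, Set.indicator (A v) (fun _ => (1:ℝ)) ω := by
    intro ω
    rw [Zset, Finset.card_filter]
    push_cast
    refine Finset.sum_congr rfl fun v hv => ?_
    rw [Set.indicator_apply]
    simp only [hA, Set.mem_setOf_eq]
  have hint : ∫ ω, ((Zset K n ω).card : ℝ) ∂μ
      = ∑ v ∈ Finset.Icc (K+1) n, (μ (A v)).toReal := by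
    simp_rw [hcard]
    rw [integral_finset_sum _ (fun v _ => Integrable.of_finite)]
    exact Finset.sum_congr rfl fun v _ => integral_indicator_one (hAm v)
  rw [hint]
  have htoReal : ∀ v, (μ (A v)).toReal
      = (1-s) ^ (Finset.univ.filter (fun e : EdgeIdx K n => covers e v)).card := by
    intro v
    rw [hμ, hA, meas_event K n s hs0 hs1 v, ENNReal.toReal_pow,
      ENNReal.toReal_ofReal (by linarith)]
  have hsplit : Finset.Icc (K+1) n = insert (K+1) (Finset.Icc (K+2) n) := by
    ext x; simp only [Finset.mem_Icc, Finset.mem_insert]; omega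
  rw [hsplit, Finset.sum_insert (by simp only [Finset.mem_Icc]; omega)]
  have h1 : (μ (A (K+1))).toReal ≤ 1 := by
    rw [htoReal]
    apply pow_le_one₀ (by linarith) (by linarith)
  have h2 : ∑ v ∈ Finset.Icc (K+2) n, (μ (A v)).toReal
      ≤ ((n - K - 1 : ℕ) : ℝ) * (1 - s) ^ (n - K - 1) := by
    have hb : ∀ v ∈ Finset.Icc (K+2) n, (μ (A v)).toReal ≤ (1-s) ^ (n - K - 1) := by
      intro v hv
      rw [Finset.mem_Icc] at hv
      rw [htoReal]
      exact pow_le_pow_of_le_one (by linarith) (by linarith)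
        (card_covers_ge K n v hv.1 hv.2)
    calc ∑ v ∈ Finset.Icc (K+2) n, (μ (A v)).toReal
        ≤ (Finset.Icc (K+2) n).card • ((1-s) ^ (n - K - 1)) :=
          Finset.sum_le_card_nsmul _ _ _ hb
      _ = ((n - K - 1 : ℕ) : ℝ) * (1 - s) ^ (n - K - 1) := by
          rw [Nat.card_Icc, nsmul_eq_mul]
          congr 2
          omega
  linarith
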